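/- Let n be an odd positive integer and f, g ∈ ℤ[x]. If M_{Q_{4n}}(f, g) is even, then 16 divides M_{Q_{4n}}(f, g). -/

import Mathlib

open Polynomial Complex Finset

noncomputable def Mzn (n : ℕ) (F : Polynomial ℤ) : ℂ :=
  ∏ j ∈ Finset.range n, Polynomial.aeval (Complex.exp (2 * Real.pi * Complex.I * j / n)) F

noncomputable def MQ (n : ℕ) (f g : Polynomial ℤ) : ℂ :=
  ∏ j ∈ Finset.range (2 * n),
    (Polynomial.aeval (Complex.exp (2 * Real.pi * Complex.I * j / (2 * n))) f *
       Polynomial.aeval (Complex.exp (2 * Real.pi * Complex.I * j / (2 * n)))⁻¹ f -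
     Complex.exp (2 * Real.pi * Complex.I * j / (2 * n)) ^ n *
       Polynomial.aeval (Complex.exp (2 * Real.pi * Complex.I * j / (2 * n))) g *
       Polynomial.aeval (Complex.exp (2 * Real.pi * Complex.I * j / (2 * n)))⁻¹ g)


section Aux

noncomputable def nmat {R : Type*} [CommRing R] (d : ℕ) (m H : R[X]) :
    Matrix (Fin d) (Fin d) R :=
  Matrix.of fun i j => ((H * X ^ (j : ℕ)) %ₘ m).coeff i

lemma nmat_map {R S : Type*} [CommRing R] [CommRing S] (φ : R →+* S) (d : ℕ)
    {m : R[X]} (hm : m.Monic) (H : R[X]) :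
    nmat d (m.map φ) (H.map φ) = φ.mapMatrix (nmat d m H) := by
  ext i j
  simp only [nmat, Matrix.of_apply, RingHom.mapMatrix_apply, Matrix.map_apply]
  rw [← coeff_map, Polynomial.map_modByMonic φ hm, Polynomial.map_mul, Polynomial.map_pow, map_X]

lemma det_nmat_eq_prod {F : Type*} [Field F] {d : ℕ} (w : Fin d → F)
    (hw : Function.Injective w) (m : F[X]) (hm : m = ∏ i, (X - C (w i))) (H : F[X]) :
    (nmat d m H).det = ∏ i, H.eval (w i) := by
  have hmonic : m.Monic := hm ▸ monic_prod_of_monic _ _ fun i _ => monic_X_sub_C _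
  have hdeg : m.natDegree = d := by
    rw [hm, natDegree_prod_of_monic _ _ fun i _ => monic_X_sub_C _]
    simp
  have hroot : ∀ i, m.eval (w i) = 0 := by
    intro i
    rw [hm, eval_prod]
    exact Finset.prod_eq_zero (mem_univ i) (by simp)
  have key : Matrix.vandermonde w * nmat d m H
      = Matrix.diagonal (fun i => H.eval (w i)) * Matrix.vandermonde w := by
    ext i j
    rw [Matrix.mul_apply, Matrix.diagonal_mul]
    have hlt : ((H * X ^ (j : ℕ)) %ₘ m).natDegree < d := by
      rcases eq_or_ne ((H * X ^ (j : ℕ)) %ₘ m) 0 with h0 | h0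
      · rw [h0]; simpa using i.pos
      · rw [natDegree_lt_iff_degree_lt h0]
        have := degree_modByMonic_lt (H * X ^ (j : ℕ)) hmonic
        rwa [degree_eq_natDegree hmonic.ne_zero, hdeg] at this
    have heval : ((H * X ^ (j : ℕ)) %ₘ m).eval (w i)
        = ∑ k : Fin d, ((H * X ^ (j : ℕ)) %ₘ m).coeff k * (w i) ^ (k : ℕ) := by
      rw [eval_eq_sum_range' hlt]
      exact (Fin.sum_univ_eq_sum_range _ _).symm
    have heval2 : ((H * X ^ (j : ℕ)) %ₘ m).eval (w i) = H.eval (w i) * (w i) ^ (j : ℕ) := by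
      rw [modByMonic_eq_sub_mul_div _ m]
      simp [hroot i]
    simp only [Matrix.vandermonde_apply, nmat, Matrix.of_apply]
    rw [← heval2, heval]
    exact Finset.sum_congr rfl fun k _ => mul_comm _ _
  have hV : (Matrix.vandermonde w).det ≠ 0 := (Matrix.det_vandermonde_ne_zero_iff).2 hw
  have h2 : (Matrix.vandermonde w).det * (nmat d m H).det
      = (∏ i, H.eval (w i)) * (Matrix.vandermonde w).det := by
    rw [← Matrix.det_mul, key, Matrix.det_mul, Matrix.det_diagonal]
  exact mul_left_cancel₀ hV (by rw [h2, mul_comm])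

lemma dickson_deg : ∀ m : ℕ, 1 ≤ m →
    (Polynomial.dickson 1 (1:ℤ) m).Monic ∧ (Polynomial.dickson 1 (1:ℤ) m).natDegree = m := by
  intro m
  induction m using Nat.strong_induction_on with
  | _ m ih =>
    match m with
    | 0 => intro h; omega
    | 1 => intro _; simpa using ⟨monic_X, natDegree_X⟩
    | 2 =>
      intro _
      have h2 : Polynomial.dickson 1 (1:ℤ) 2 = X ^ 2 - C 2 := by
        rw [dickson_two]
        norm_num
      rw [h2]
      exact ⟨monic_X_pow_sub_C _ (by norm_num), natDegree_X_pow_sub_C⟩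
    | (m + 3) =>
      intro _
      have ih1 := ih (m + 2) (by omega) (by omega)
      have ih0 := ih (m + 1) (by omega) (by omega)
      have hrec : Polynomial.dickson 1 (1:ℤ) (m + 3)
          = X * Polynomial.dickson 1 (1:ℤ) (m + 2) - C 1 * Polynomial.dickson 1 (1:ℤ) (m + 1) :=
        dickson_add_two 1 1 (m + 1)
      have hpmon : (X * Polynomial.dickson 1 (1:ℤ) (m + 2)).Monic := monic_X.mul ih1.1
      have hpdeg : (X * Polynomial.dickson 1 (1:ℤ) (m + 2)).natDegree = m + 3 := by
        rw [Polynomial.Monic.natDegree_mul monic_X ih1.1, natDegree_X, ih1.2]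
        omega
      have hqdeg : (C (1:ℤ) * Polynomial.dickson 1 (1:ℤ) (m + 1)).degree
          < (X * Polynomial.dickson 1 (1:ℤ) (m + 2)).degree := by
        rw [C_1, one_mul, degree_eq_natDegree ih0.1.ne_zero, degree_eq_natDegree hpmon.ne_zero,
          hpdeg, ih0.2]
        exact_mod_cast by omega
      constructor
      · rw [hrec, sub_eq_add_neg]
        exact hpmon.add_of_left (by rwa [degree_neg])
      · rw [hrec]
        have := degree_sub_eq_left_of_degree_lt hqdeg
        rw [← hpdeg]
        exact natDegree_eq_of_degree_eq this

noncomputable def Wpoly (K : ℕ) : Polynomial ℤ :=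
  1 + ∑ m ∈ Finset.range K, Polynomial.dickson 1 1 (m + 1)

lemma Wpoly_spec (K : ℕ) : (Wpoly K).Monic ∧ (Wpoly K).natDegree = K := by
  induction K with
  | zero => simpa [Wpoly] using monic_one
  | succ K ih =>
    have hstep : Wpoly (K + 1) = Polynomial.dickson 1 1 (K + 1) + Wpoly K := by
      rw [Wpoly, Wpoly, Finset.sum_range_succ]
      ring
    have hd := dickson_deg (K + 1) (by omega)
    have hlt : (Wpoly K).degree < (Polynomial.dickson 1 (1:ℤ) (K + 1)).degree := by
      rw [degree_eq_natDegree ih.1.ne_zero, degree_eq_natDegree hd.1.ne_zero, ih.2, hd.2]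
      exact_mod_cast by omega
    constructor
    · rw [hstep]; exact hd.1.add_of_left hlt
    · rw [hstep, natDegree_eq_of_degree_eq (degree_add_eq_left_of_degree_lt hlt), hd.2]

lemma Wpoly_root {K : ℕ} (z : ℂ) (hz0 : z ≠ 0) (hz1 : z ≠ 1) (hzn : z ^ (2 * K + 1) = 1) :
    Polynomial.aeval (z + z⁻¹) (Wpoly K) = 0 := by
  have hinv : z * z⁻¹ = 1 := mul_inv_cancel₀ hz0
  have hmap : Polynomial.aeval (z + z⁻¹) (Wpoly K)
      = 1 + ∑ m ∈ Finset.range K, (z ^ (m + 1) + (z⁻¹) ^ (m + 1)) := by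
    rw [Wpoly, map_add, map_one, map_sum]
    congr 1
    refine Finset.sum_congr rfl fun m _ => ?_
    have : Polynomial.aeval (z + z⁻¹) (Polynomial.dickson 1 (1:ℤ) (m + 1))
        = Polynomial.eval (z + z⁻¹) (Polynomial.dickson 1 (1:ℂ) (m + 1)) := by
      rw [Polynomial.aeval_def, Polynomial.eval₂_eq_eval_map, Polynomial.map_dickson]
      norm_num
    rw [this, Polynomial.dickson_one_one_eval_add_inv z z⁻¹ hinv]
  have hgeom : ∑ j ∈ Finset.range (2 * K + 1), z ^ j = 0 := by
    rw [geom_sum_eq hz1, hzn, sub_self, zero_div]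
  have hmul : z ^ K * (1 + ∑ m ∈ Finset.range K, (z ^ (m + 1) + (z⁻¹) ^ (m + 1)))
      = ∑ j ∈ Finset.range (2 * K + 1), z ^ j := by
    have hsplit : ∑ j ∈ Finset.range (2 * K + 1), z ^ j
        = (∑ j ∈ Finset.range K, z ^ j) + (z ^ K + ∑ m ∈ Finset.range K, z ^ (K + (m + 1))) := by
      have h1 : 2 * K + 1 = K + (K + 1) := by omega
      rw [h1, Finset.sum_range_add, Finset.sum_range_succ', Nat.add_zero]
      ring
    have hterm : ∀ m ∈ Finset.range K,
        z ^ K * (z ^ (m + 1) + (z⁻¹) ^ (m + 1)) = z ^ (K + (m + 1)) + z ^ (K - 1 - m) := by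
      intro m hm
      have hmK : m < K := Finset.mem_range.mp hm
      rw [mul_add]
      have h1 : z ^ K * z ^ (m + 1) = z ^ (K + (m + 1)) := by rw [← pow_add]
      have h2 : z ^ K * (z⁻¹) ^ (m + 1) = z ^ (K - 1 - m) := by
        have : z ^ K = z ^ (K - 1 - m) * z ^ (m + 1) := by rw [← pow_add]; congr 1; omega
        rw [this, mul_assoc, ← mul_pow, hinv, one_pow, mul_one]
      rw [h1, h2]
    rw [hsplit, mul_add, mul_one, Finset.mul_sum, Finset.sum_congr rfl hterm,
      Finset.sum_add_distrib, Finset.sum_range_reflect (fun j => z ^ j) K]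
    ring
  have hzK : z ^ K ≠ 0 := pow_ne_zero _ hz0
  have := hmul.trans hgeom
  rcases mul_eq_zero.mp this with h | h
  · exact absurd h hzK
  · rw [hmap, h]

noncomputable def Wpoly' (K : ℕ) : Polynomial ℤ := C ((-1)^K) * (Wpoly K).comp (-X)

lemma Wpoly'_spec (K : ℕ) : (Wpoly' K).Monic ∧ (Wpoly' K).natDegree = K := by
  have hW := Wpoly_spec K
  have hne : ((Wpoly K).comp (-X)) ≠ 0 := by
    intro h
    have : ((Wpoly K).comp (-X)).comp (-X) = 0 := by rw [h]; simp
    rw [comp_assoc] at this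
    simp at this
    exact hW.1.ne_zero this
  have hdc : ((Wpoly K).comp (-X)).natDegree = K := by
    rw [natDegree_comp, hW.2]
    simp
  have hlc : ((Wpoly K).comp (-X)).leadingCoeff = (-1) ^ K := by
    rw [leadingCoeff_comp (by simp), hW.1.leadingCoeff, hW.2]
    simp
  constructor
  · unfold Wpoly'
    unfold Polynomial.Monic
    rw [leadingCoeff_mul, leadingCoeff_C, hlc, ← pow_add, ← two_mul, pow_mul]
    norm_num
  · unfold Wpoly'
    rw [natDegree_C_mul (by positivity <;> simp : ((-1:ℤ)^K) ≠ 0), hdc]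

lemma Wpoly'_root {K : ℕ} (w : ℂ) (h0 : w ≠ 0) (h1 : w ≠ -1) (hn : w ^ (2 * K + 1) = -1) :
    Polynomial.aeval (w + w⁻¹) (Wpoly' K) = 0 := by
  have hodd : Odd (2 * K + 1) := ⟨K, by ring⟩
  have hz := Wpoly_root (-w) (neg_ne_zero.2 h0)
    (by intro h; exact h1 (by rw [← neg_neg w, h]; ))
    (by rw [hodd.neg_pow, hn, neg_neg])
  rw [Wpoly', map_mul, aeval_C, aeval_comp, map_neg, aeval_X]
  have : -(w + w⁻¹) = (-w) + (-w)⁻¹ := by rw [inv_neg]; ring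
  rw [this, hz, mul_zero]

lemma Wpoly'_map2 (K : ℕ) : (Wpoly' K).map (Int.castRingHom (ZMod 2))
    = (Wpoly K).map (Int.castRingHom (ZMod 2)) := by
  rw [Wpoly', Polynomial.map_mul, map_C, Polynomial.map_comp]
  have h1 : ((Int.castRingHom (ZMod 2)) ((-1:ℤ) ^ K)) = 1 := by
    have hm1 : (Int.castRingHom (ZMod 2)) (-1 : ℤ) = 1 := by decide
    rw [map_pow, hm1, one_pow]
  have h2 : (Polynomial.map (Int.castRingHom (ZMod 2)) (-X : Polynomial ℤ)) = X := by
    rw [Polynomial.map_neg, map_X]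
    exact CharTwo.neg_eq X
  rw [h1, h2, C_1, one_mul, comp_X]

lemma exists_sympol (p : Polynomial ℤ) : ∃ q : Polynomial ℤ, ∀ z : ℂ, z ≠ 0 →
    Polynomial.aeval (z + z⁻¹) q = Polynomial.aeval z p * Polynomial.aeval z⁻¹ p := by
  suffices h : ∀ N : ℕ, ∀ p : Polynomial ℤ, p.natDegree ≤ N →
      (∃ q0 : Polynomial ℤ, ∀ z : ℂ, z ≠ 0 →
        Polynomial.aeval (z + z⁻¹) q0 = Polynomial.aeval z p + Polynomial.aeval z⁻¹ p) ∧
      (∃ q1 : Polynomial ℤ, ∀ z : ℂ, z ≠ 0 →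
        Polynomial.aeval (z + z⁻¹) q1
          = z * Polynomial.aeval z p + z⁻¹ * Polynomial.aeval z⁻¹ p) ∧
      (∃ qs : Polynomial ℤ, ∀ z : ℂ, z ≠ 0 →
        Polynomial.aeval (z + z⁻¹) qs = Polynomial.aeval z p * Polynomial.aeval z⁻¹ p) by
    exact (h p.natDegree p le_rfl).2.2
  intro N
  induction N with
  | zero =>
    intro p hp
    rw [eq_C_of_natDegree_le_zero hp]
    refine ⟨⟨C (2 * p.coeff 0), ?_⟩, ⟨C (p.coeff 0) * X, ?_⟩, ⟨C (p.coeff 0 ^ 2), ?_⟩⟩ <;>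
      intro z hz <;> simp [aeval_C, map_ofNat] <;> push_cast <;> ring
  | succ N ihN =>
    intro p hp
    have hdiv : p.divX.natDegree ≤ N := by
      have := p.natDegree_divX_eq_natDegree_tsub_one
      omega
    obtain ⟨⟨q0', h0⟩, ⟨q1', h1⟩, ⟨qs', hs⟩⟩ := ihN p.divX hdiv
    set a := p.coeff 0 with ha
    have hdecomp : ∀ z : ℂ, Polynomial.aeval z p = (a : ℂ) + z * Polynomial.aeval z p.divX := by
      intro z
      conv_lhs => rw [← p.divX_mul_X_add]
      rw [map_add, map_mul, aeval_X, aeval_C]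
      simp only [algebraMap_int_eq, eq_intCast]
      ring
    refine ⟨⟨(C a + C a) + q1', ?_⟩, ⟨C a * X + (X * q1' - q0'), ?_⟩,
      ⟨C (a * a) + C a * q1' + qs', ?_⟩⟩ <;> intro z hz <;>
      have hz' : z⁻¹ ≠ 0 := inv_ne_zero hz <;>
      have hzz : z * z⁻¹ = 1 := mul_inv_cancel₀ hz <;>
      rw [hdecomp z, hdecomp z⁻¹] <;>
      simp only [map_add, map_mul, map_sub, aeval_X, aeval_C, algebraMap_int_eq, eq_intCast,
        map_intCast, h0 z hz, h1 z hz, hs z hz] <;>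
      push_cast <;> field_simp <;> ring


lemma monic_eq_prod_of_roots {d : ℕ} (p : Polynomial ℂ) (hm : p.Monic) (hd : p.natDegree = d)
    (w : Fin d → ℂ) (hinj : Function.Injective w) (hroot : ∀ i, p.eval (w i) = 0) :
    p = ∏ i, (X - C (w i)) := by
  set q := ∏ i, (X - C (w i)) with hq
  have hqm : q.Monic := monic_prod_of_monic _ _ fun i _ => monic_X_sub_C _
  have hqd : q.natDegree = d := by
    rw [hq, natDegree_prod_of_monic _ _ fun i _ => monic_X_sub_C _]; simp
  have hsub : p - q = 0 := by
    rcases eq_or_ne (p - q) 0 with h | h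
    · exact h
    · have hdeg : (p - q).degree < (d : ℕ) := by
        have h1 : p.degree = q.degree := by
          rw [degree_eq_natDegree hm.ne_zero, degree_eq_natDegree hqm.ne_zero, hd, hqd]
        have := degree_sub_lt h1 hm.ne_zero (by rw [hm.leadingCoeff, hqm.leadingCoeff])
        rwa [degree_eq_natDegree hm.ne_zero, hd] at this
      have hnd : (p - q).natDegree < d := (natDegree_lt_iff_degree_lt h).2 hdeg
      refine eq_zero_of_natDegree_lt_card_of_eval_eq_zero (p - q) hinj (fun i => ?_)
        (by simpa using hnd)
      rw [eval_sub, hroot i, hq, eval_prod]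
      rw [Finset.prod_eq_zero (Finset.mem_univ i) (by simp)]
      ring
  exact sub_eq_zero.mp hsub
  
noncomputable def nint (d : ℕ) (m H : Polynomial ℤ) : ℤ := (nmat d m H).det

lemma nint_cast_eq {d : ℕ} (m H : Polynomial ℤ) (hm : m.Monic) (hd : m.natDegree = d)
    (w : Fin d → ℂ) (hinj : Function.Injective w)
    (hroot : ∀ i, Polynomial.aeval (w i) m = 0) :
    ((nint d m H : ℤ) : ℂ) = ∏ i, Polynomial.aeval (w i) H := by
  have hfact : m.map (Int.castRingHom ℂ) = ∏ i, (X - C (w i)) := by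
    refine monic_eq_prod_of_roots _ (hm.map _) (by rw [hm.natDegree_map]; exact hd) w hinj
      (fun i => ?_)
    rw [eval_map, ← algebraMap_int_eq, ← aeval_def]
    exact hroot i
  have h1 : ((nint d m H : ℤ) : ℂ)
      = ((Int.castRingHom ℂ).mapMatrix (nmat d m H)).det := by
    rw [← RingHom.map_det]; rfl
  rw [h1, ← nmat_map (Int.castRingHom ℂ) d hm H, det_nmat_eq_prod w hinj _ hfact]
  refine Finset.prod_congr rfl fun i _ => ?_
  rw [eval_map, ← algebraMap_int_eq, ← aeval_def]

lemma nint_mod2 (d : ℕ) (m m' H H' : Polynomial ℤ) (hm : m.Monic) (hm' : m'.Monic)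
    (hmm : m.map (Int.castRingHom (ZMod 2)) = m'.map (Int.castRingHom (ZMod 2)))
    (hHH : H.map (Int.castRingHom (ZMod 2)) = H'.map (Int.castRingHom (ZMod 2))) :
    ((nint d m H : ℤ) : ZMod 2) = ((nint d m' H' : ℤ) : ZMod 2) := by
  have h1 : ((nint d m H : ℤ) : ZMod 2)
      = (nmat d (m.map (Int.castRingHom (ZMod 2))) (H.map (Int.castRingHom (ZMod 2)))).det := by
    rw [nmat_map _ d hm, ← RingHom.map_det]; rfl
  have h2 : ((nint d m' H' : ℤ) : ZMod 2)
      = (nmat d (m'.map (Int.castRingHom (ZMod 2))) (H'.map (Int.castRingHom (ZMod 2)))).det := by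
    rw [nmat_map _ d hm', ← RingHom.map_det]; rfl
  rw [h1, h2, hmm, hHH]

lemma prod_range_two_mul (N : ℕ) (F : ℕ → ℂ) :
    ∏ j ∈ Finset.range (2 * N), F j
      = (∏ t ∈ Finset.range N, F (2 * t)) * ∏ t ∈ Finset.range N, F (2 * t + 1) := by
  induction N with
  | zero => simp
  | succ N ih =>
    have h : 2 * (N + 1) = (2 * N) + 1 + 1 := by ring
    rw [h, Finset.prod_range_succ, Finset.prod_range_succ, ih,
      Finset.prod_range_succ, Finset.prod_range_succ]
    ring

lemma arith_final (a b c d C D M : ℤ)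
    (hM : M = (a ^ 2 - b ^ 2) * (c ^ 2 + d ^ 2) * C ^ 2 * D ^ 2)
    (hac : (2:ℤ) ∣ a - c) (hbd : (2:ℤ) ∣ b - d) (hCD : (2:ℤ) ∣ C - D)
    (h2 : 2 ∣ M) : 16 ∣ M := by
  rcases Int.even_or_odd C with hC | hC
  · have hD : Even D := by
      have h1 : Even (C - D) := even_iff_two_dvd.2 hCD
      rcases Int.even_sub.mp h1 with h
      exact h.mp hC
    obtain ⟨u, hu⟩ := hC
    obtain ⟨v, hv⟩ := hD
    exact ⟨(a ^ 2 - b ^ 2) * (c ^ 2 + d ^ 2) * u ^ 2 * v ^ 2, by rw [hM, hu, hv]; ring⟩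
  · have hD : Odd D := by
      have h1 : Even (C - D) := even_iff_two_dvd.2 hCD
      rcases Int.even_sub.mp h1 with h
      rcases Int.even_or_odd D with hD | hD
      · exact absurd (h.mpr hD) (by simpa using hC)
      · exact hD
    rcases Int.even_or_odd a with hA | hA
    · rcases Int.even_or_odd b with hB | hB
      · -- all even
        have hc : Even c := by
          have h1 : Even (a - c) := even_iff_two_dvd.2 hac
          exact (Int.even_sub.mp h1).mp hA
        have hd' : Even d := by
          have h1 : Even (b - d) := even_iff_two_dvd.2 hbd
          exact (Int.even_sub.mp h1).mp hB
        obtain ⟨s, hs⟩ := hA; obtain ⟨t, ht⟩ := hB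
        obtain ⟨u, hu⟩ := hc; obtain ⟨v, hv⟩ := hd'
        exact ⟨(s ^ 2 - t ^ 2) * (u ^ 2 + v ^ 2) * C ^ 2 * D ^ 2,
          by rw [hM, hs, ht, hu, hv]; ring⟩
      · -- a even, b odd : M odd, contradiction
        exfalso
        have hc : Even c := (Int.even_sub.mp (even_iff_two_dvd.2 hac)).mp hA
        have hd' : Odd d := by
          rcases Int.even_or_odd d with h | h
          · exact absurd ((Int.even_sub.mp (even_iff_two_dvd.2 hbd)).mpr h)
              (by simpa using hB)
          · exact h
        have h1 : Odd (a ^ 2 - b ^ 2) := by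
          rcases hA with ⟨s, hs⟩; rcases hB with ⟨t, ht⟩
          exact ⟨2 * s ^ 2 - 2 * t ^ 2 - 2 * t - 1, by rw [hs, ht]; ring⟩
        have h2' : Odd (c ^ 2 + d ^ 2) := by
          rcases hc with ⟨u, hu⟩; rcases hd' with ⟨v, hv⟩
          exact ⟨2 * u ^ 2 + 2 * v ^ 2 + 2 * v, by rw [hu, hv]; ring⟩
        have hCo : Odd (C ^ 2) := hC.pow
        have hDo : Odd (D ^ 2) := hD.pow
        have hModd : Odd M := by rw [hM]; exact ((h1.mul h2').mul hCo).mul hDo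
        rw [Int.odd_iff] at hModd
        omega
    · rcases Int.even_or_odd b with hB | hB
      · -- a odd, b even : contradiction
        exfalso
        have hc : Odd c := by
          rcases Int.even_or_odd c with h | h
          · exact absurd ((Int.even_sub.mp (even_iff_two_dvd.2 hac)).mpr h)
              (by simpa using hA)
          · exact h
        have hd' : Even d := (Int.even_sub.mp (even_iff_two_dvd.2 hbd)).mp hB
        have h1 : Odd (a ^ 2 - b ^ 2) := by
          rcases hA with ⟨s, hs⟩; rcases hB with ⟨t, ht⟩
          exact ⟨2 * s ^ 2 + 2 * s - 2 * t ^ 2, by rw [hs, ht]; ring⟩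
        have h2' : Odd (c ^ 2 + d ^ 2) := by
          rcases hc with ⟨u, hu⟩; rcases hd' with ⟨v, hv⟩
          exact ⟨2 * u ^ 2 + 2 * u + 2 * v ^ 2, by rw [hu, hv]; ring⟩
        have hModd : Odd M := by rw [hM]; exact ((h1.mul h2').mul hC.pow).mul hD.pow
        rw [Int.odd_iff] at hModd
        omega
      · -- a, b odd
        have hc : Odd c := by
          rcases Int.even_or_odd c with h | h
          · exact absurd ((Int.even_sub.mp (even_iff_two_dvd.2 hac)).mpr h)
              (by simpa using hA)
          · exact h
        have hd' : Odd d := by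
          rcases Int.even_or_odd d with h | h
          · exact absurd ((Int.even_sub.mp (even_iff_two_dvd.2 hbd)).mpr h)
              (by simpa using hB)
          · exact h
        rcases hA with ⟨s, hs⟩; rcases hB with ⟨t, ht⟩
        rcases hc with ⟨u, hu⟩; rcases hd' with ⟨v, hv⟩
        have h8 : (8:ℤ) ∣ a ^ 2 - b ^ 2 := by
          have hsplit : a ^ 2 - b ^ 2 = 4 * ((s - t) * (s + t + 1)) := by rw [hs, ht]; ring
          have h2st : (2:ℤ) ∣ (s - t) * (s + t + 1) := by
            rcases Int.even_or_odd (s - t) with h | h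
            · exact Dvd.dvd.mul_right (even_iff_two_dvd.1 h) _
            · refine Dvd.dvd.mul_left ?_ _
              rw [Int.odd_iff] at h
              omega
          obtain ⟨w, hw⟩ := h2st
          exact ⟨w, by rw [hsplit, hw]; ring⟩
        have h2cd : (2:ℤ) ∣ c ^ 2 + d ^ 2 :=
          ⟨2 * u ^ 2 + 2 * u + 2 * v ^ 2 + 2 * v + 1, by rw [hu, hv]; ring⟩
        obtain ⟨x, hx⟩ := h8
        obtain ⟨y, hy⟩ := h2cd
        exact ⟨x * y * C ^ 2 * D ^ 2, by rw [hM, hx, hy]; ring⟩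

end Aux

theorem stmt11 (n : ℕ) (hn : 0 < n) (hodd : Odd n)
    (f g : Polynomial ℤ) (M : ℤ) (hM : (M : ℂ) = MQ n f g)
    (h : 2 ∣ M) : 16 ∣ M := by
  classical
  obtain ⟨K, hK⟩ := hodd
  set ζ : ℂ := Complex.exp (2 * Real.pi * Complex.I / (2 * n)) with hζdef
  have hn0 : (n : ℂ) ≠ 0 := Nat.cast_ne_zero.2 hn.ne'
  have hprim : IsPrimitiveRoot ζ (2 * n) := by
    have h1 := Complex.isPrimitiveRoot_exp (2 * n) (by omega)
    have h2 : ((2 * n : ℕ) : ℂ) = 2 * (n : ℂ) := by push_cast; ring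
    rwa [h2] at h1
  have hζ0 : ζ ≠ 0 := Complex.exp_ne_zero _
  have hzp0 : ∀ s : ℕ, ζ ^ s ≠ 0 := fun s => pow_ne_zero _ hζ0
  have hζ2n : ζ ^ (2 * n) = 1 := hprim.pow_eq_one
  have hζn : ζ ^ n = -1 := by
    rw [hζdef, ← Complex.exp_nat_mul]
    have harg : (n : ℂ) * (2 * (Real.pi : ℂ) * Complex.I / (2 * n)) =
        (Real.pi : ℂ) * Complex.I := by field_simp
    rw [harg, Complex.exp_pi_mul_I]
  have hpow1 : ∀ s : ℕ, 0 < s → s < 2 * n → ζ ^ s ≠ 1 := by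
    intro s hs1 hs2 hcon
    have := (hprim.pow_eq_one_iff_dvd s).1 hcon
    have := Nat.le_of_dvd hs1 this
    omega
  have hyflip : ∀ s t : ℕ, s + t = 2 * n → ζ ^ s + (ζ ^ s)⁻¹ = ζ ^ t + (ζ ^ t)⁻¹ := by
    intro s t hst
    have hmul : ζ ^ s * ζ ^ t = 1 := by rw [← pow_add, hst, hζ2n]
    have h1 : ζ ^ s = (ζ ^ t)⁻¹ := eq_inv_of_mul_eq_one_left hmul
    rw [h1, inv_inv, add_comm]
  -- cosine values and injectivity
  have hcos : ∀ s : ℕ, ζ ^ s + (ζ ^ s)⁻¹ = ((2 * Real.cos (Real.pi * s / n) : ℝ) : ℂ) := by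
    intro s
    have hzs : ζ ^ s = Complex.exp (((Real.pi * s / n : ℝ) : ℂ) * Complex.I) := by
      rw [hζdef, ← Complex.exp_nat_mul]
      congr 1
      push_cast
      field_simp
    rw [hzs, ← Complex.exp_neg]
    have h2c := Complex.two_cos (x := ((Real.pi * s / n : ℝ) : ℂ))
    rw [show -((((Real.pi * s / n : ℝ)) : ℂ) * Complex.I)
        = (-(((Real.pi * s / n : ℝ)) : ℂ)) * Complex.I from by ring, ← h2c,
      Complex.ofReal_mul, Complex.ofReal_cos]
    norm_num
  have hwinj : ∀ s t : ℕ, 1 ≤ s → s ≤ n - 1 → 1 ≤ t → t ≤ n - 1 →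
      ζ ^ s + (ζ ^ s)⁻¹ = ζ ^ t + (ζ ^ t)⁻¹ → s = t := by
    intro s t hs1 hs2 ht1 ht2 heq
    rw [hcos s, hcos t] at heq
    have heqr : 2 * Real.cos (Real.pi * s / n) = 2 * Real.cos (Real.pi * t / n) := by
      exact_mod_cast heq
    have hcoseq : Real.cos (Real.pi * s / n) = Real.cos (Real.pi * t / n) := by linarith
    have hpi := Real.pi_pos
    have hnr : (0:ℝ) < n := by exact_mod_cast hn
    have hmem : ∀ u : ℕ, 1 ≤ u → u ≤ n - 1 → Real.pi * u / n ∈ Set.Icc 0 Real.pi := by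
      intro u hu1 hu2
      constructor
      · positivity
      · rw [div_le_iff₀ hnr]
        have hun : (u : ℝ) ≤ n := by
          have : u ≤ n := by omega
          exact_mod_cast this
        nlinarith
    have hinj := Real.injOn_cos (hmem s hs1 hs2) (hmem t ht1 ht2) hcoseq
    field_simp at hinj
    first
    | exact hinj
    | exact_mod_cast hinj
    | (rcases hinj with h1 | h1
       · first | exact h1 | exact_mod_cast h1
       · exact absurd h1 (by positivity))
  -- symmetric polynomials
  obtain ⟨qf, hqf⟩ := exists_sympol f
  obtain ⟨qg, hqg⟩ := exists_sympol g
  set Qm : Polynomial ℤ := qf - qg with hQm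
  set Qp : Polynomial ℤ := qf + qg with hQp
  set a : ℤ := f.eval 1 with ha
  set b : ℤ := g.eval 1 with hb
  set c : ℤ := f.eval (-1) with hc
  set d : ℤ := g.eval (-1) with hd
  set CC : ℤ := nint K (Wpoly K) Qm with hCC
  set DD : ℤ := nint K (Wpoly' K) Qp with hDD
  have haev : ∀ (p : Polynomial ℤ) (r : ℤ), Polynomial.aeval ((r : ℂ)) p = ((p.eval r : ℤ) : ℂ) := by
    intro p r
    rw [aeval_def, eval₂_eq_eval_map, algebraMap_int_eq, eval_intCast_map]
    rfl
  -- the factor function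
  set Φ : ℕ → ℂ := fun j =>
    Polynomial.aeval (ζ ^ j) f * Polynomial.aeval ((ζ ^ j)⁻¹) f -
      (ζ ^ j) ^ n * Polynomial.aeval (ζ ^ j) g * Polynomial.aeval ((ζ ^ j)⁻¹) g with hΦ
  have h0 : (M : ℂ) = ∏ j ∈ Finset.range (2 * n), Φ j := by
    rw [hM]
    unfold MQ
    refine Finset.prod_congr rfl fun j _ => ?_
    have hee : Complex.exp (2 * Real.pi * Complex.I * j / (2 * n)) = ζ ^ j := by
      rw [hζdef, ← Complex.exp_nat_mul]
      congr 1
      ring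
    rw [hee, hΦ]
  have h1 : (M : ℂ) = (∏ t ∈ Finset.range n, Φ (2 * t)) * ∏ t ∈ Finset.range n, Φ (2 * t + 1) := by
    rw [h0, prod_range_two_mul]
  -- ======== even part ========
  have hEt : ∀ t : ℕ, Φ (2 * t) = Polynomial.aeval (ζ ^ (2 * t) + (ζ ^ (2 * t))⁻¹) Qm := by
    intro t
    have hz0 : ζ ^ (2 * t) ≠ 0 := hzp0 _
    have hzn : (ζ ^ (2 * t)) ^ n = 1 := by
      rw [← pow_mul, show 2 * t * n = 2 * n * t from by ring, pow_mul, hζ2n, one_pow]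
    rw [hΦ]
    simp only
    rw [hzn, hQm, map_sub, hqf _ hz0, hqg _ hz0]
    ring
  have hΦ0 : Φ (2 * 0) = ((a ^ 2 - b ^ 2 : ℤ) : ℂ) := by
    rw [hΦ]
    simp only [Nat.mul_zero, pow_zero, inv_one, one_pow, one_mul]
    have h1c : (1 : ℂ) = ((1 : ℤ) : ℂ) := by norm_num
    rw [h1c, haev f 1, haev g 1, ← ha, ← hb]
    push_cast
    ring
  have hwC : ∀ i : Fin K, Polynomial.aeval (ζ ^ (2 * (1 + (i : ℕ))) + (ζ ^ (2 * (1 + (i : ℕ))))⁻¹)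
      (Wpoly K) = 0 := by
    intro i
    have hiK := i.isLt
    refine Wpoly_root _ (hzp0 _) ?_ ?_
    · exact hpow1 _ (by omega) (by omega)
    · rw [← pow_mul, show 2 * (1 + (i : ℕ)) * (2 * K + 1) = 2 * n * (1 + (i : ℕ)) from by
        rw [hK]; ring, pow_mul, hζ2n, one_pow]
  have hinjC : Function.Injective
      (fun i : Fin K => ζ ^ (2 * (1 + (i : ℕ))) + (ζ ^ (2 * (1 + (i : ℕ))))⁻¹) := by
    intro i j hij
    have hiK := i.isLt
    have hjK := j.isLt
    have := hwinj (2 * (1 + (i : ℕ))) (2 * (1 + (j : ℕ)))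
      (by omega) (by omega) (by omega) (by omega) hij
    have : (i : ℕ) = j := by omega
    exact Fin.ext this
  have hCCval : ((CC : ℤ) : ℂ)
      = ∏ i : Fin K, Polynomial.aeval (ζ ^ (2 * (1 + (i : ℕ))) + (ζ ^ (2 * (1 + (i : ℕ))))⁻¹) Qm :=
    nint_cast_eq _ _ (Wpoly_spec K).1 (Wpoly_spec K).2 _ hinjC hwC
  have hEven : ∏ t ∈ Finset.range n, Φ (2 * t) = ((a ^ 2 - b ^ 2 : ℤ) : ℂ) * ((CC : ℤ) : ℂ) ^ 2 := by
    rw [Finset.range_eq_Ico, Finset.prod_eq_prod_Ico_succ_bot hn]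
    have hsplit : ∏ t ∈ Finset.Ico 1 n, Φ (2 * t)
        = (∏ t ∈ Finset.Ico 1 (K + 1), Φ (2 * t)) * ∏ t ∈ Finset.Ico (K + 1) n, Φ (2 * t) :=
      (Finset.prod_Ico_consecutive _ (by omega) (by omega)).symm
    have hrefl : ∏ t ∈ Finset.Ico (K + 1) n, Φ (2 * t) = ∏ t ∈ Finset.Ico 1 (K + 1), Φ (2 * t) := by
      refine Finset.prod_nbij' (fun t => n - t) (fun t => n - t) ?_ ?_ ?_ ?_ ?_
      · intro t ht
        simp only [Finset.mem_Ico] at ht ⊢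
        omega
      · intro t ht
        simp only [Finset.mem_Ico] at ht ⊢
        omega
      · intro t ht
        simp only [Finset.mem_Ico] at ht
        omega
      · intro t ht
        simp only [Finset.mem_Ico] at ht
        omega
      · intro t ht
        simp only [Finset.mem_Ico] at ht
        rw [hEt, hEt]
        exact congrArg (fun y => Polynomial.aeval y Qm)
          (hyflip (2 * t) (2 * (n - t)) (by omega))
    have hIcoK : ∏ t ∈ Finset.Ico 1 (K + 1), Φ (2 * t) = ((CC : ℤ) : ℂ) := by
      rw [Finset.prod_Ico_eq_prod_range]
      simp only [Nat.add_sub_cancel]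
      rw [hCCval, ← Fin.prod_univ_eq_prod_range (fun i => Φ (2 * (1 + i)))]
      refine Finset.prod_congr rfl fun i _ => ?_
      rw [hEt]
    rw [hsplit, hrefl, hIcoK, hΦ0]
    ring
  -- ======== odd part ========
  have hOt : ∀ t : ℕ, Φ (2 * t + 1) = Polynomial.aeval (ζ ^ (2 * t + 1) + (ζ ^ (2 * t + 1))⁻¹) Qp := by
    intro t
    have hz0 : ζ ^ (2 * t + 1) ≠ 0 := hzp0 _
    have hzn : (ζ ^ (2 * t + 1)) ^ n = -1 := by
      rw [← pow_mul, show (2 * t + 1) * n = n * (2 * t + 1) from by ring, pow_mul, hζn]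
      exact Odd.neg_one_pow ⟨t, by ring⟩
    rw [hΦ]
    simp only
    rw [hzn, hQp, map_add, hqf _ hz0, hqg _ hz0]
    ring
  have hΦn : Φ (2 * K + 1) = ((c ^ 2 + d ^ 2 : ℤ) : ℂ) := by
    rw [hΦ]
    simp only
    have h2K : 2 * K + 1 = n := by omega
    rw [h2K, hζn]
    have hm1 : ((-1 : ℂ))⁻¹ = -1 := by norm_num
    have hm1c : (-1 : ℂ) = ((-1 : ℤ) : ℂ) := by norm_num
    rw [hm1, hm1c, haev f (-1), haev g (-1), ← hc, ← hd]
    have hneg : ((-1 : ℤ) : ℂ) ^ n = -1 := by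
      rw [show ((-1 : ℤ) : ℂ) = -1 from by norm_num]
      exact Odd.neg_one_pow ⟨K, by omega⟩
    rw [hneg]
    push_cast
    ring
  have hwD : ∀ i : Fin K, Polynomial.aeval (ζ ^ (2 * (i : ℕ) + 1) + (ζ ^ (2 * (i : ℕ) + 1))⁻¹)
      (Wpoly' K) = 0 := by
    intro i
    have hiK := i.isLt
    refine Wpoly'_root _ (hzp0 _) ?_ ?_
    · intro hcon
      have hmul : ζ ^ (2 * (i : ℕ) + 1) * ζ ^ n = 1 := by rw [hcon, hζn]; ring
      rw [← pow_add] at hmul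
      have := hpow1 (2 * (i : ℕ) + 1 + n) (by omega) (by omega)
      exact this hmul
    · rw [← pow_mul, show (2 * (i : ℕ) + 1) * (2 * K + 1) = n * (2 * (i : ℕ) + 1) from by
        rw [hK]; ring, pow_mul, hζn]
      exact Odd.neg_one_pow ⟨(i : ℕ), by ring⟩
  have hinjD : Function.Injective
      (fun i : Fin K => ζ ^ (2 * (i : ℕ) + 1) + (ζ ^ (2 * (i : ℕ) + 1))⁻¹) := by
    intro i j hij
    have hiK := i.isLt
    have hjK := j.isLt
    have := hwinj (2 * (i : ℕ) + 1) (2 * (j : ℕ) + 1)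
      (by omega) (by omega) (by omega) (by omega) hij
    have : (i : ℕ) = j := by omega
    exact Fin.ext this
  have hDDval : ((DD : ℤ) : ℂ)
      = ∏ i : Fin K, Polynomial.aeval (ζ ^ (2 * (i : ℕ) + 1) + (ζ ^ (2 * (i : ℕ) + 1))⁻¹) Qp :=
    nint_cast_eq _ _ (Wpoly'_spec K).1 (Wpoly'_spec K).2 _ hinjD hwD
  have hrangeK : ∏ t ∈ Finset.range K, Φ (2 * t + 1) = ((DD : ℤ) : ℂ) := by
    rw [hDDval, ← Fin.prod_univ_eq_prod_range (fun t => Φ (2 * t + 1))]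
    refine Finset.prod_congr rfl fun i _ => ?_
    rw [hOt]
  have hOdd : ∏ t ∈ Finset.range n, Φ (2 * t + 1)
      = ((c ^ 2 + d ^ 2 : ℤ) : ℂ) * ((DD : ℤ) : ℂ) ^ 2 := by
    have hsplit : ∏ t ∈ Finset.range n, Φ (2 * t + 1)
        = (∏ t ∈ Finset.range K, Φ (2 * t + 1)) * ∏ i ∈ Finset.range (K + 1), Φ (2 * (K + i) + 1) := by
      rw [show n = K + (K + 1) from by omega, Finset.prod_range_add]
    have hsucc : ∏ i ∈ Finset.range (K + 1), Φ (2 * (K + i) + 1)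
        = (∏ i ∈ Finset.range K, Φ (2 * (K + (i + 1)) + 1)) * Φ (2 * (K + 0) + 1) :=
      Finset.prod_range_succ' _ _
    have hmid : ∏ i ∈ Finset.range K, Φ (2 * (K + (i + 1)) + 1)
        = ∏ t ∈ Finset.range K, Φ (2 * t + 1) := by
      refine Finset.prod_nbij' (fun i => K - 1 - i) (fun t => K - 1 - t) ?_ ?_ ?_ ?_ ?_
      · intro t ht; simp only [Finset.mem_range] at ht ⊢; omega
      · intro t ht; simp only [Finset.mem_range] at ht ⊢; omega
      · intro t ht; simp only [Finset.mem_range] at ht; omega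
      · intro t ht; simp only [Finset.mem_range] at ht; omega
      · intro i hi
        simp only [Finset.mem_range] at hi
        rw [hOt, hOt]
        exact congrArg (fun y => Polynomial.aeval y Qp)
          (hyflip (2 * (K + (i + 1)) + 1) (2 * (K - 1 - i) + 1) (by omega))
    rw [hsplit, hsucc, hmid, hrangeK]
    simp only [Nat.add_zero]
    rw [hΦn]
    ring
  -- ======== combine ========
  have hMint : M = (a ^ 2 - b ^ 2) * (c ^ 2 + d ^ 2) * CC ^ 2 * DD ^ 2 := by
    have hMC : (M : ℂ) = (((a ^ 2 - b ^ 2) * (c ^ 2 + d ^ 2) * CC ^ 2 * DD ^ 2 : ℤ) : ℂ) := by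
      rw [h1, hEven, hOdd]
      push_cast
      ring
    exact_mod_cast hMC
  -- ======== congruences mod 2 ========
  have hmod : ∀ (p : Polynomial ℤ) (r : ℤ),
      ((p.eval r : ℤ) : ZMod 2) = (p.map (Int.castRingHom (ZMod 2))).eval ((r : ℤ) : ZMod 2) := by
    intro p r
    rw [eval_intCast_map]
    rfl
  have hdvd2 : ∀ x : ℤ, ((x : ZMod 2) = 0) → (2:ℤ) ∣ x := by
    intro x hx
    exact_mod_cast (ZMod.intCast_zmod_eq_zero_iff_dvd x 2).1 hx
  have hneg1 : ((-1 : ℤ) : ZMod 2) = ((1 : ℤ) : ZMod 2) := by decide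
  have hac : (2:ℤ) ∣ a - c := by
    refine hdvd2 _ ?_
    push_cast [ha, hc]
    rw [show ((f.eval 1 : ℤ) : ZMod 2) = _ from hmod f 1, show ((f.eval (-1) : ℤ) : ZMod 2) = _ from hmod f (-1), hneg1]
    ring
  have hbd : (2:ℤ) ∣ b - d := by
    refine hdvd2 _ ?_
    push_cast [hb, hd]
    rw [show ((g.eval 1 : ℤ) : ZMod 2) = _ from hmod g 1, show ((g.eval (-1) : ℤ) : ZMod 2) = _ from hmod g (-1), hneg1]
    ring
  have hCD : (2:ℤ) ∣ CC - DD := by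
    refine hdvd2 _ ?_
    push_cast
    have := nint_mod2 K (Wpoly K) (Wpoly' K) Qm Qp (Wpoly_spec K).1 (Wpoly'_spec K).1
      (Wpoly'_map2 K).symm ?_
    · rw [← hCC, ← hDD] at this
      rw [this]
      ring
    · rw [hQm, hQp, Polynomial.map_sub, Polynomial.map_add, sub_eq_add_neg, CharTwo.neg_eq]
  exact arith_final a b c d CC DD M hMint hac hbd hCD h
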